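/- Let m ≥ 2 and k ≥ 1, and consider a deck of m^k cards with its in and out m-shuffles I_m and O_m. For 1 ≤ j ≤ k let B_j = O_m^{j−1} I_m O_m^{−j} (composed left to right). The subgroup of the symmetric group on the m^k card positions generated by B_1, B_2, …, B_k is isomorphic to (ℤ/2ℤ)^k; concretely, each B_j has order 2, B_i B_j = B_j B_i for all i, j, and no product of a nonempty subset of {B_1, …, B_k} is the identity. -/

import Mathlib

section Aux

variable {m K : ℕ}

/-- Flip (reverse) the digits at the coordinates where `v` is `1`. -/
def flipFun (v : Fin K → ZMod 2) (f : Fin K → Fin m) : Fin K → Fin m :=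
  fun i => if v i = 1 then (f i).rev else f i

lemma zmod2_cases : ∀ z : ZMod 2, z = 0 ∨ z = 1 := by decide

lemma flipFun_invol (v : Fin K → ZMod 2) :
    Function.Involutive (flipFun (m := m) v) := by
  intro f; funext i
  simp only [flipFun]
  by_cases h : v i = 1 <;> simp [h, Fin.rev_rev]

/-- The permutation flipping digits at coordinates where `v` is `1`. -/
def flipPerm (v : Fin K → ZMod 2) : Equiv.Perm (Fin K → Fin m) :=
  ⟨flipFun v, flipFun v, flipFun_invol v, flipFun_invol v⟩

@[simp] lemma flipPerm_apply (v : Fin K → ZMod 2) (f : Fin K → Fin m) :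
    flipPerm v f = flipFun v f := rfl

lemma flipPerm_mul (v w : Fin K → ZMod 2) :
    flipPerm (m := m) v * flipPerm w = flipPerm (v + w) := by
  apply Equiv.ext; intro f
  show flipFun v (flipFun w f) = flipFun (v + w) f
  funext i
  rcases zmod2_cases (v i) with h1 | h1 <;> rcases zmod2_cases (w i) with h2 | h2 <;>
    simp [flipFun, h1, h2, Pi.add_apply, Fin.rev_rev,
      show (0 : ZMod 2) ≠ 1 by decide, show (1 + 1 : ZMod 2) = 0 by decide]

lemma flipFun_single (q i : Fin K) (f : Fin K → Fin m) :
    flipFun (Pi.single q (1 : ZMod 2)) f i = if i = q then (f i).rev else f i := by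
  by_cases h : i = q
  · subst h; simp [flipFun, Pi.single_eq_same]
  · simp [flipFun, h, Pi.single_eq_of_ne h, show (0 : ZMod 2) ≠ 1 by decide]

/-- The homomorphism realizing `(ℤ/2)^K` as digit-flip permutations of `Fin (m ^ K)`. -/
noncomputable def psiHom (m K : ℕ) : Multiplicative (Fin K → ZMod 2) →* Equiv.Perm (Fin (m ^ K)) :=
  MonoidHom.mk' (fun v => finFunctionFinEquiv.permCongr (flipPerm (Multiplicative.toAdd v)))
    (by
      intro a b
      rw [toAdd_mul, ← flipPerm_mul]
      apply Equiv.ext; intro x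
      simp [Equiv.permCongr_apply, Equiv.Perm.mul_apply])

lemma psiHom_apply (v : Multiplicative (Fin K → ZMod 2)) (x : Fin (m ^ K)) :
    psiHom m K v x = finFunctionFinEquiv (flipPerm (Multiplicative.toAdd v)
      (finFunctionFinEquiv.symm x)) := rfl

/-- Digits of `m * (x % m^k') + r`. -/
lemma dig_shift {m : ℕ} (hm : 2 ≤ m) (k' x r : ℕ) (hr : r < m) :
    ∀ i ≤ k', (m * (x % m ^ k') + r) / m ^ i % m
      = if i = 0 then r else x / m ^ (i - 1) % m := by
  intro i hi
  rcases i with _ | i'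
  · simp [Nat.mul_add_mod, Nat.mod_eq_of_lt hr]
  · rw [if_neg (Nat.succ_ne_zero i'), Nat.succ_sub_one]
    have h1 : m ^ (i' + 1) = m * m ^ i' := by rw [pow_succ']
    have h2 : (m * (x % m ^ k') + r) / m = x % m ^ k' := by
      rw [Nat.mul_add_div (by omega), Nat.div_eq_of_lt hr, add_zero]
    have hd : m ^ i' * m ∣ m ^ k' := by
      rw [← pow_succ]; exact pow_dvd_pow m hi
    have key : (m * (x % m ^ k') + r) / m ^ (i' + 1) = x % m ^ k' / m ^ i' := by
      rw [h1, ← Nat.div_div_eq_div_mul, h2]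
    rw [key, ← Nat.mod_mul_right_div_self, ← Nat.mod_mul_right_div_self,
      Nat.mod_mod_of_dvd x hd]

end Aux

open Fin.NatCast Fin.CommRing


/-- For `m ≥ 2`, `k ≥ 1`, with `O`, `I` the out and in `m`-shuffles on a
deck of `m^k` cards and `B j = O^(j−1) I O^(−j)` (composed left to right; in Mathlib's
right-to-left convention `(O⁻¹)^j * I * O^(j−1)`) for `1 ≤ j ≤ k`: each `B j` has order 2,
the `B j` pairwise commute, no product of a nonempty subset of `{B 1, …, B k}` is the
identity, and the subgroup generated by `B 1, …, B k` is isomorphic to `(ℤ/2ℤ)^k`. -/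
theorem B_subgroup_iso (m k : ℕ) (hm : 2 ≤ m) (hk : 1 ≤ k)
    (O I : Equiv.Perm (Fin (m ^ k)))
    (hO : ∀ i : Fin (m ^ k),
      (O i : ℕ) = m * ((i : ℕ) % m ^ (k - 1)) + (i : ℕ) / m ^ (k - 1))
    (hI : ∀ i : Fin (m ^ k),
      (I i : ℕ) = m * ((i : ℕ) % m ^ (k - 1)) + (m - 1 - (i : ℕ) / m ^ (k - 1)))
    (B : ℕ → Equiv.Perm (Fin (m ^ k)))
    (hB : ∀ j, B j = (O⁻¹) ^ j * I * O ^ (j - 1)) :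
    (∀ j, 1 ≤ j → j ≤ k → orderOf (B j) = 2) ∧
    (∀ j₁ j₂, 1 ≤ j₁ → j₁ ≤ k → 1 ≤ j₂ → j₂ ≤ k → B j₁ * B j₂ = B j₂ * B j₁) ∧
    (∀ s : Finset ℕ, s ⊆ Finset.Icc 1 k → s.Nonempty →
      ((s.sort (· ≤ ·)).map B).prod ≠ 1) ∧
    Nonempty (↥(Subgroup.closure (B '' Set.Icc 1 k)) ≃*
      Multiplicative (Fin k → ZMod 2)) := by
  obtain ⟨k', rfl⟩ : ∃ k', k = k' + 1 := ⟨k - 1, by omega⟩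
  haveI : NeZero m := ⟨by omega⟩
  let e : (Fin (k' + 1) → Fin m) ≃ Fin (m ^ (k' + 1)) := finFunctionFinEquiv
  have hdig : ∀ (x : Fin (m ^ (k' + 1))) (i : Fin (k' + 1)),
      ((e.symm x) i : ℕ) = (x : ℕ) / m ^ (i : ℕ) % m := fun x i => rfl
  have hrlt : ∀ x : Fin (m ^ (k' + 1)), (x : ℕ) / m ^ k' < m := by
    intro x
    exact Nat.div_lt_of_lt_mul (by rw [← pow_succ]; exact x.isLt)
  -- digits of O x
  have hOdig : ∀ (x : Fin (m ^ (k' + 1))),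
      e.symm (O x) = fun i => (e.symm x) (i - 1) := by
    intro x; funext i
    have hi : (i : ℕ) ≤ k' := by omega
    apply Fin.val_injective
    rw [hdig, hdig, hO, show k' + 1 - 1 = k' from rfl,
      dig_shift hm k' (x : ℕ) _ (hrlt x) (i : ℕ) hi, Fin.coe_sub_one]
    by_cases h0 : i = 0
    · simp [h0, Nat.mod_eq_of_lt (hrlt x)]
    · have : (i : ℕ) ≠ 0 := fun h => h0 (Fin.ext h)
      simp [h0, this]
  -- digits of I x
  have hIdig : ∀ (x : Fin (m ^ (k' + 1))),
      e.symm (I x) = fun i => if i = 0 then ((e.symm x) (i - 1)).rev else (e.symm x) (i - 1) := by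
    intro x; funext i
    have hi : (i : ℕ) ≤ k' := by omega
    have hr2 : m - 1 - (x : ℕ) / m ^ k' < m := lt_of_le_of_lt (Nat.sub_le _ _) (by omega)
    apply Fin.val_injective
    rw [hdig, hI, show k' + 1 - 1 = k' from rfl,
      dig_shift hm k' (x : ℕ) _ hr2 (i : ℕ) hi]
    by_cases h0 : i = 0
    · rw [if_pos h0, if_pos (by rw [h0]; rfl), Fin.val_rev, hdig,
        Fin.coe_sub_one, if_pos h0, Nat.mod_eq_of_lt (hrlt x)]
      omega
    · have hv : (i : ℕ) ≠ 0 := fun h => h0 (Fin.ext h)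
      rw [if_neg hv, if_neg h0, hdig, Fin.coe_sub_one, if_neg h0]
  
  set ψ := psiHom m (k' + 1) with hψ
  set F : Fin (k' + 1) → Equiv.Perm (Fin (m ^ (k' + 1))) :=
    fun q => ψ (Multiplicative.ofAdd (Pi.single q 1)) with hF
  have hFdef : ∀ q : Fin (k' + 1),
      F q = ψ (Multiplicative.ofAdd ((Pi.single q 1 : Fin (k' + 1) → ZMod 2))) :=
    fun _ => rfl
  have hFapp : ∀ (q : Fin (k' + 1)) (x : Fin (m ^ (k' + 1))),
      e.symm (F q x) = flipFun (Pi.single q 1) (e.symm x) := by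
    intro q x
    rw [hF, hψ]
    show e.symm (e (flipPerm _ (e.symm x))) = _
    rw [Equiv.symm_apply_apply, flipPerm_apply]
    rfl
  -- the key conjugation identity
  have key : ∀ q : Fin (k' + 1), F q * O = O * F (q - 1) := by
    intro q
    apply Equiv.ext; intro x
    apply e.symm.injective
    show e.symm (F q (O x)) = e.symm (O (F (q - 1) x))
    funext i
    simp only [hFapp, hOdig, flipFun_single, sub_left_inj]
  have hbase : I = O * F (0 - 1) := by
    apply Equiv.ext; intro x
    apply e.symm.injective
    show e.symm (I x) = e.symm (O (F (0 - 1) x))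
    funext i
    simp only [hIdig, hOdig, hFapp, flipFun_single, sub_left_inj]
  have hconj : ∀ q : Fin (k' + 1), O⁻¹ * F q * O = F (q - 1) := by
    intro q
    rw [mul_assoc, key, ← mul_assoc, inv_mul_cancel, one_mul]
  -- B j is the digit flip at position -(j)
  have hBF : ∀ j : ℕ, 1 ≤ j → B j = F (-(j : Fin (k' + 1))) := by
    intro j hj
    induction j with
    | zero => omega
    | succ j ih =>
      rcases Nat.lt_or_ge 1 (j + 1) with hj1 | hj1
      · have hj' : 1 ≤ j := by omega
        have hstep : B (j + 1) = O⁻¹ * B j * O := by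
          rw [hB (j + 1), hB j, Nat.add_sub_cancel]
          have h2 : O ^ (j - 1) * O = O ^ j := by
            rw [← pow_succ]; congr 1; omega
          rw [pow_succ' O⁻¹ j, ← h2]
          simp only [mul_assoc]
        rw [hstep, ih hj', hconj]
        congr 1
        push_cast
        ring
      · have : j = 0 := by omega
        subst this
        rw [hB 1, pow_one, Nat.sub_self, pow_zero, mul_one, hbase,
          ← mul_assoc, inv_mul_cancel, one_mul]
        congr 1
  -- injectivity of ψ
  have hinj : Function.Injective ψ := by
    rw [injective_iff_map_eq_one]
    intro v hv
    have h1 : ∀ f : Fin (k' + 1) → Fin m, flipFun (Multiplicative.toAdd v) f = f := by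
      intro f
      have h2 := congrArg (fun p : Equiv.Perm (Fin (m ^ (k' + 1))) => e.symm (p (e f))) hv
      rw [hψ] at h2
      simpa [e, psiHom_apply, Equiv.symm_apply_apply] using h2
    have h0 : Multiplicative.toAdd v = 0 := by
      funext i
      rcases zmod2_cases (Multiplicative.toAdd v i) with h | h
      · simpa using h
      · exfalso
        have h5 := congrFun (h1 (fun _ => (0 : Fin m))) i
        have h2 : Fin.rev (0 : Fin m) = (0 : Fin m) := by simpa [flipFun, h] using h5
        have hval := congrArg Fin.val h2
        rw [Fin.val_rev] at hval
        simp only [Fin.val_zero] at hval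
        omega
    calc v = Multiplicative.ofAdd (Multiplicative.toAdd v) := rfl
    _ = Multiplicative.ofAdd 0 := by rw [h0]
    _ = 1 := rfl
  -- injectivity of the index map
  have pinj : ∀ j₁ j₂ : ℕ, 1 ≤ j₁ → j₁ ≤ k' + 1 → 1 ≤ j₂ → j₂ ≤ k' + 1 →
      -(j₁ : Fin (k' + 1)) = -(j₂ : Fin (k' + 1)) → j₁ = j₂ := by
    intro j₁ j₂ h1 h2 h3 h4 h
    have h' : (j₁ : Fin (k' + 1)) = (j₂ : Fin (k' + 1)) := neg_injective h
    have hv : j₁ % (k' + 1) = j₂ % (k' + 1) := by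
      have := congrArg Fin.val h'
      rwa [Fin.val_natCast, Fin.val_natCast] at this
    have e1 : j₁ % (k' + 1) = if j₁ = k' + 1 then 0 else j₁ := by
      split
      · next hh => rw [hh, Nat.mod_self]
      · next hh => exact Nat.mod_eq_of_lt (by omega)
    have e2 : j₂ % (k' + 1) = if j₂ = k' + 1 then 0 else j₂ := by
      split
      · next hh => rw [hh, Nat.mod_self]
      · next hh => exact Nat.mod_eq_of_lt (by omega)
    rw [e1, e2] at hv
    split_ifs at hv <;> omega
  -- each flip is B of a suitable index
  have hsurj : ∀ i : Fin (k' + 1), ∃ j : ℕ, 1 ≤ j ∧ j ≤ k' + 1 ∧ -(j : Fin (k' + 1)) = i := by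
    intro i
    refine ⟨k' + 1 - (i : ℕ), by omega, by omega, ?_⟩
    rw [Nat.cast_sub (by omega : (i : ℕ) ≤ k' + 1), Fin.natCast_self, Fin.cast_val_eq_self,
      zero_sub, neg_neg]
  have hone : (1 : ZMod 2) ≠ 0 := by decide
  haveI : Fact (Nat.Prime 2) := ⟨Nat.prime_two⟩
  refine ⟨?_, ?_, ?_, ?_⟩
  · -- order 2
    intro j hj1 hj2
    rw [hBF j hj1, hFdef]
    apply orderOf_eq_prime
    · rw [← map_pow]
      have hsq : (Multiplicative.ofAdd
          ((Pi.single (-(j : Fin (k' + 1))) 1 : Fin (k' + 1) → ZMod 2))) ^ 2 = 1 := by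
        have hz : (1 + 1 : ZMod 2) = 0 := rfl
        rw [pow_two, ← ofAdd_add, ← Pi.single_add, hz, Pi.single_zero]
        rfl
      rw [hsq, map_one]
    · intro h
      have h2 : Multiplicative.ofAdd
          ((Pi.single (-(j : Fin (k' + 1))) 1 : Fin (k' + 1) → ZMod 2)) = 1 :=
        hinj (h.trans (map_one ψ).symm)
      have h3 := congrFun (Multiplicative.ofAdd.injective h2) (-(j : Fin (k' + 1)))
      rw [Pi.single_eq_same] at h3
      exact hone h3
  · -- commuting
    intro j₁ j₂ h1 h2 h3 h4
    rw [hBF j₁ h1, hBF j₂ h3]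
    simp only [hFdef]
    rw [← map_mul ψ, ← map_mul ψ, mul_comm]
  · -- nonempty subset products are nontrivial
    intro s hs hsne hcontra
    set w : ℕ → Multiplicative (Fin (k' + 1) → ZMod 2) :=
      fun j => Multiplicative.ofAdd (Pi.single (-(j : Fin (k' + 1))) 1) with hw
    have hmem : ∀ j ∈ s, 1 ≤ j ∧ j ≤ k' + 1 := by
      intro j hj
      have := hs hj
      rw [Finset.mem_Icc] at this
      exact this
    have hlist : (s.sort (· ≤ ·)).map B = ((s.sort (· ≤ ·)).map w).map ψ := by
      rw [List.map_map]
      apply List.map_congr_left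
      intro j hj
      have hjs := (Finset.mem_sort (α := ℕ) (· ≤ ·)).mp hj
      exact (hBF j (hmem j hjs).1)
    rw [hlist, ← map_list_prod] at hcontra
    have hT : ((s.sort (· ≤ ·)).map w).prod = 1 := hinj (hcontra.trans (map_one ψ).symm)
    have hTs : ((s.sort (· ≤ ·)).map w).prod = ∏ j ∈ s, w j := by
      rw [Finset.prod_eq_multiset_prod, ← Finset.sort_eq s (· ≤ ·), Multiset.map_coe,
        Multiset.prod_coe]
    rw [hTs, ← ofAdd_sum] at hT
    have hT' : Multiplicative.ofAdd
          (∑ j ∈ s, (Pi.single (-(j : Fin (k' + 1))) 1 : Fin (k' + 1) → ZMod 2))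
        = Multiplicative.ofAdd 0 := hT
    have hsum := Multiplicative.ofAdd.injective hT'
    obtain ⟨j₀, hj₀⟩ := hsne
    have := congrFun hsum (-(j₀ : Fin (k' + 1)))
    rw [Finset.sum_apply, Finset.sum_eq_single j₀] at this
    · rw [Pi.single_eq_same] at this
      exact hone this
    · intro j hj hne
      apply Pi.single_eq_of_ne
      intro hpe
      exact hne (pinj j j₀ (hmem j hj).1 (hmem j hj).2 (hmem j₀ hj₀).1 (hmem j₀ hj₀).2 hpe.symm)
    · intro h; exact absurd hj₀ h
  · -- the isomorphism
    have hrange : ψ.range = Subgroup.closure (B '' Set.Icc 1 (k' + 1)) := by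
      apply le_antisymm
      · rintro g ⟨v, rfl⟩
        have hv : v = ((List.finRange (k' + 1)).map
            (fun i => Multiplicative.ofAdd (Pi.single i (Multiplicative.toAdd v i)))).prod := by
          rw [← Fin.prod_univ_def, ← ofAdd_sum, Finset.univ_sum_single]
          rfl
        rw [hv, map_list_prod]
        apply Subgroup.list_prod_mem
        intro g hg
        rw [List.map_map, List.mem_map] at hg
        obtain ⟨i, _, rfl⟩ := hg
        rcases zmod2_cases (Multiplicative.toAdd v i) with h | h
        · simp only [Function.comp_apply, h, Pi.single_zero, ofAdd_zero, map_one]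
          exact one_mem _
        · obtain ⟨j, hj1, hj2, hj3⟩ := hsurj i
          apply Subgroup.subset_closure
          refine ⟨j, Set.mem_Icc.mpr ⟨hj1, hj2⟩, ?_⟩
          simp only [Function.comp_apply, h]
          rw [hBF j hj1, hFdef, hj3]
      · rw [Subgroup.closure_le]
        rintro g ⟨j, hj, rfl⟩
        rw [Set.mem_Icc] at hj
        rw [hBF j hj.1, hFdef]
        exact ⟨_, rfl⟩
    exact ⟨(MulEquiv.subgroupCongr hrange.symm).trans (MonoidHom.ofInjective hinj).symm⟩
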